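/- The group of field automorphisms of ℂ has cardinality 2^(2^ℵ₀). -/

import Mathlib

open Cardinal

noncomputable section

lemma aevalEquiv_X {ι : Type} (v : ι → ℂ) (hv : AlgebraicIndependent ℤ v) (i : ι) :
    hv.aevalEquiv (MvPolynomial.X i) = ⟨v i, Algebra.subset_adjoin ⟨i, rfl⟩⟩ := by
  apply Subtype.ext
  have := hv.algebraMap_aevalEquiv (MvPolynomial.X i)
  simpa using this

lemma equivOfTranscendenceBasis_apply {ι κ : Type} (v : ι → ℂ) (w : κ → ℂ)
    (hv : IsTranscendenceBasis ℤ v) (hw : IsTranscendenceBasis ℤ w) (e : ι ≃ κ) (i : ι) :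
    IsAlgClosed.equivOfTranscendenceBasis v w e hv hw (v i) = w (e i) := by
  have hvi : v i = algebraMap (Algebra.adjoin ℤ (Set.range v)) ℂ
      ⟨v i, Algebra.subset_adjoin ⟨i, rfl⟩⟩ := rfl
  rw [IsAlgClosed.equivOfTranscendenceBasis, hvi, IsAlgClosure.equivOfEquiv_algebraMap]
  have h1 : hv.1.aevalEquiv.symm.toRingEquiv ⟨v i, Algebra.subset_adjoin ⟨i, rfl⟩⟩ =
      MvPolynomial.X i := by
    rw [AlgEquiv.toRingEquiv_eq_coe]
    show hv.1.aevalEquiv.symm _ = _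
    rw [← aevalEquiv_X v hv.1 i, AlgEquiv.symm_apply_apply]
  simp only [RingEquiv.trans_apply, h1]
  have h2 : (AlgEquiv.ofAlgHom (MvPolynomial.rename (R := ℤ) e)
      (MvPolynomial.rename e.symm)
      (by ext; simp) (by ext; simp)).toRingEquiv (MvPolynomial.X i) = MvPolynomial.X (e i) := by
    show MvPolynomial.rename (R := ℤ) e (MvPolynomial.X i) = _
    simp
  rw [h2, AlgEquiv.toRingEquiv_eq_coe]
  show (algebraMap _ ℂ) (hw.1.aevalEquiv (MvPolynomial.X (e i))) = w (e i)
  rw [aevalEquiv_X w hw.1 (e i)]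
  rfl

theorem card_complex_ringAut :
    Cardinal.mk (ℂ ≃+* ℂ) = (2 : Cardinal) ^ ((2 : Cardinal) ^ Cardinal.aleph0) := by
  have h2a : ((2 : Cardinal) ^ ℵ₀) = #ℂ := by rw [mk_complex, two_power_aleph0]
  apply le_antisymm
  · have hle : #(ℂ ≃+* ℂ) ≤ #(ℂ → ℂ) :=
      mk_le_of_injective (f := fun f : ℂ ≃+* ℂ => (f : ℂ → ℂ)) fun f g h => by
        ext x; exact congrFun h x
    have harr : #(ℂ → ℂ) = ((2 : Cardinal) ^ ℵ₀) ^ ((2 : Cardinal) ^ ℵ₀) := by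
      rw [h2a, ← power_def]
    have hmul : ℵ₀ * ((2 : Cardinal) ^ ℵ₀) = (2 : Cardinal) ^ ℵ₀ :=
      mul_eq_right (cantor ℵ₀).le (cantor ℵ₀).le aleph0_ne_zero
    calc #(ℂ ≃+* ℂ) ≤ #(ℂ → ℂ) := hle
      _ = ((2 : Cardinal) ^ ℵ₀) ^ ((2 : Cardinal) ^ ℵ₀) := harr
      _ = (2 : Cardinal) ^ (ℵ₀ * ((2 : Cardinal) ^ ℵ₀)) := by rw [power_mul]
      _ = _ := by rw [hmul]
  · obtain ⟨s, hs⟩ := exists_isTranscendenceBasis ℤ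
      ℂ
    have hcard : #ℂ = #s :=
      IsAlgClosed.cardinal_eq_cardinal_transcendence_basis_of_aleph0_lt' _ hs (le_of_eq mk_int)
        (by rw [mk_complex]; exact aleph0_lt_continuum)
    have hsinf : Infinite s := by
      rw [infinite_iff, ← hcard, mk_complex]
      exact aleph0_le_continuum
    have hinj : Function.Injective
        (fun e : Equiv.Perm s => IsAlgClosed.equivOfTranscendenceBasis
          ((↑) : s → ℂ) ((↑) : s → ℂ) e hs hs) := by
      intro e f h
      ext i
      have h2 := congrArg (fun σ : ℂ ≃+* ℂ => σ (i : ℂ)) h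
      simp only [equivOfTranscendenceBasis_apply] at h2
      exact congrArg Subtype.val (Subtype.coe_injective h2)
    calc ((2 : Cardinal) ^ ((2 : Cardinal) ^ ℵ₀)) = 2 ^ #s := by rw [h2a, hcard]
      _ = #(Equiv.Perm s) := (mk_perm_eq_two_power (α := s)).symm
      _ ≤ #(ℂ ≃+* ℂ) := mk_le_of_injective hinj
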